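/- arXiv:0909.1156 — 3 statements merged into one kernel-verified Lean document; each statement's English description precedes it below -/
import Mathlib

section
/- The first moment of Kloosterman sums with square arguments satisfies SK = ∑_{a∈F_q^*, a a square} K(λ;a) = (1/2)·((-1)^r·q + 1). -/
open Finset

/-- The canonical additive character `λ(x) = e^{2πi·tr(x)/3}` of a finite field of
characteristic 3, where tr is the absolute trace to F_3. -/
noncomputable def canChar (F : Type) [Field F] [Fintype F] [Algebra (ZMod 3) F] (x : F) : ℂ :=
  Complex.exp (2 * Real.pi * Complex.I * ((Algebra.trace (ZMod 3) F x).val : ℂ) / 3)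

/-- The Kloosterman sum `K(λ;a) = ∑_{α ∈ F^*} λ(α + a·α⁻¹)` for the canonical character. -/
noncomputable def kloos (F : Type) [Field F] [Fintype F] [DecidableEq F]
    [Algebra (ZMod 3) F] (a : F) : ℂ :=
  ∑ α ∈ Finset.univ.filter (fun α : F => α ≠ 0), canChar F (α + a * α⁻¹)

set_option linter.unusedSectionVars false

section Aux
variable (F : Type) [Field F] [Fintype F] [DecidableEq F] [Algebra (ZMod 3) F]

lemma canChar_zero : canChar F 0 = 1 := by
  simp [canChar]

lemma canChar_add (x y : F) : canChar F (x + y) = canChar F x * canChar F y := by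
  unfold canChar
  rw [← Complex.exp_add, map_add]
  set a := (Algebra.trace (ZMod 3) F x).val
  set b := (Algebra.trace (ZMod 3) F y).val
  rw [Complex.exp_eq_exp_iff_exists_int]
  refine ⟨-((a + b) / 3 : ℕ), ?_⟩
  have h1 : ((Algebra.trace (ZMod 3) F x + Algebra.trace (ZMod 3) F y).val : ℂ)
      = ((a + b) % 3 : ℕ) := by rw [ZMod.val_add]
  have h2 := Nat.mod_add_div (a + b) 3
  have h3 : (((a + b) % 3 : ℕ) : ℂ) = (a : ℂ) + b - 3 * ((a + b) / 3 : ℕ) := by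
    have h4 : (((a + b) % 3 + 3 * ((a + b) / 3) : ℕ) : ℂ) = ((a + b : ℕ) : ℂ) := by rw [h2]
    push_cast at h4
    linear_combination h4
  rw [h1, h3, Int.cast_neg, Int.cast_natCast]
  ring

lemma canChar_exists_ne_one : ∃ x : F, canChar F x ≠ 1 := by
  haveI : Module.Finite (ZMod 3) F := Module.Finite.of_finite
  obtain ⟨x, hx⟩ := Algebra.trace_surjective (ZMod 3) F 1
  refine ⟨x, ?_⟩
  unfold canChar
  rw [hx]
  have h1 : ZMod.val (1 : ZMod 3) = 1 := rfl
  rw [h1]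
  intro hcontra
  rw [Complex.exp_eq_one_iff] at hcontra
  obtain ⟨n, hn⟩ := hcontra
  rw [Nat.cast_one] at hn
  have hpi : (2 * (Real.pi : ℂ) * Complex.I) ≠ 0 := by
    simp [Real.pi_ne_zero, Complex.I_ne_zero]
  have h2 : ((1 - 3 * n : ℤ) : ℂ) * (2 * (Real.pi : ℂ) * Complex.I) = 0 := by
    push_cast
    linear_combination 3 * hn
  have h3 : ((1 - 3 * n : ℤ) : ℂ) = 0 := by
    rcases mul_eq_zero.1 h2 with h | h
    · exact h
    · exact absurd h hpi
  have h4 : (1 - 3 * n : ℤ) = 0 := by exact_mod_cast h3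
  omega

lemma sum_canChar : ∑ x : F, canChar F x = 0 := by
  obtain ⟨x₀, hx₀⟩ := canChar_exists_ne_one F
  have h : ∑ x : F, canChar F x = ∑ x : F, canChar F (x₀ + x) := by
    exact (Fintype.sum_equiv (Equiv.addLeft x₀) _ (canChar F) (fun x => rfl)).symm
  have h2 : ∑ x : F, canChar F (x₀ + x) = canChar F x₀ * ∑ x : F, canChar F x := by
    rw [Finset.mul_sum]
    exact Finset.sum_congr rfl fun x _ => canChar_add F x₀ x
  have := h.trans h2
  by_contra hS
  exact hx₀ (mul_right_cancel₀ hS (by linear_combination -this))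

lemma sum_canChar_mul (c : F) (hc : c ≠ 0) :
    ∑ x ∈ univ.filter (fun x : F => x ≠ 0), canChar F (c * x) = -1 := by
  have h0 : ∑ x : F, canChar F (c * x) = 0 :=
    (Fintype.sum_equiv (Equiv.mulLeft₀ c hc) _ (canChar F) (fun x => rfl)).trans (sum_canChar F)
  rw [filter_ne' univ 0]
  have h1 := Finset.sum_erase_add univ (fun x : F => canChar F (c * x)) (mem_univ 0)
  rw [h0] at h1
  simp only [mul_zero, canChar_zero F] at h1
  linear_combination h1

-- charP
lemma charF : CharP F 3 := charP_of_injective_algebraMap (algebraMap (ZMod 3) F).injective 3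

lemma two_ne_zero_F : (2 : F) ≠ 0 := by
  haveI := charF F
  intro h
  have h2 : ((2 : ℕ) : F) = 0 := by exact_mod_cast h
  rw [CharP.cast_eq_zero_iff F 3 2] at h2
  omega

lemma neg_ne_self' {x : F} (hx : x ≠ 0) : x ≠ -x := by
  intro h
  apply hx
  have h2 : (2 : F) * x = 0 := by linear_combination h
  rcases mul_eq_zero.1 h2 with h | h
  · exact absurd h (two_ne_zero_F F)
  · exact h

lemma fiber_eq {a x₀ : F} (hx₀ : x₀ ≠ 0) (ha : a = x₀ ^ 2) :
    (univ.filter (fun x : F => x ≠ 0)).filter (fun x => x ^ 2 = a) = {x₀, -x₀} := by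
  ext y
  simp only [mem_filter, mem_univ, true_and, mem_insert, mem_singleton, ha]
  constructor
  · rintro ⟨hy, h⟩
    have : (y - x₀) * (y + x₀) = 0 := by linear_combination h
    rcases mul_eq_zero.1 this with h | h
    · left; linear_combination h
    · right; linear_combination h
  · rintro (rfl | rfl)
    · exact ⟨hx₀, rfl⟩
    · exact ⟨neg_ne_zero.2 hx₀, by ring⟩

end Aux

/-- `SK = ∑_{a ∈ F_q^*, a square} K(λ;a) = (1/2)·((-1)^r·q + 1)`, where q = 3^r. -/
theorem first_moment_square_args (r : ℕ) (hr : 0 < r) (F : Type) [Field F] [Fintype F]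
    [DecidableEq F] [Algebra (ZMod 3) F] (hF : Fintype.card F = 3 ^ r) :
    ∑ a ∈ Finset.univ.filter (fun a : F => a ≠ 0 ∧ ∃ x : F, x ≠ 0 ∧ a = x ^ 2),
      kloos F a
      = (1 / 2 : ℂ) * ((-1 : ℂ) ^ r * (3 ^ r : ℂ) + 1) := by
  classical
  set S := univ.filter (fun x : F => x ≠ 0) with hSdef
  set A := univ.filter (fun a : F => a ≠ 0 ∧ ∃ x : F, x ≠ 0 ∧ a = x ^ 2) with hAdef
  -- card S
  have hq3 : (3 : ℕ) ≤ 3 ^ r := by calc (3:ℕ) = 3 ^ 1 := (pow_one 3).symm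
                                       _ ≤ 3 ^ r := Nat.pow_le_pow_right (by norm_num) hr
  have hcardS : S.card = 3 ^ r - 1 := by
    rw [hSdef, filter_ne' univ 0, card_erase_of_mem (mem_univ 0), card_univ, hF]
  -- Step 1: double counting over square roots
  have hmaps : ∀ x ∈ S, x ^ 2 ∈ A := by
    intro x hx
    rw [hSdef, mem_filter] at hx
    rw [hAdef, mem_filter]
    exact ⟨mem_univ _, pow_ne_zero 2 hx.2, x, hx.2, rfl⟩
  have step1 : ∑ x ∈ S, kloos F (x ^ 2) = 2 * ∑ a ∈ A, kloos F a := by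
    rw [← Finset.sum_fiberwise_of_maps_to hmaps (fun x => kloos F (x ^ 2)), mul_sum]
    refine sum_congr rfl fun a ha => ?_
    rw [hAdef, mem_filter] at ha
    obtain ⟨-, ha0, x₀, hx₀, rfl⟩ := ha
    have hfib : S.filter (fun x => x ^ 2 = x₀ ^ 2) = {x₀, -x₀} := fiber_eq F hx₀ rfl
    rw [hfib]
    have hne : x₀ ∉ ({-x₀} : Finset F) := by
      simpa using neg_ne_self' F hx₀
    rw [sum_insert hne, sum_singleton]
    have : (-x₀) ^ 2 = x₀ ^ 2 := by ring
    rw [this]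
    ring
  -- Step 2: substitution α = x u in each Kloosterman sum
  have step2 : ∀ x ∈ S, kloos F (x ^ 2) = ∑ u ∈ S, canChar F ((u + u⁻¹) * x) := by
    intro x hx
    rw [hSdef, mem_filter] at hx
    have hx0 : x ≠ 0 := hx.2
    unfold kloos
    refine Finset.sum_nbij' (fun α => x⁻¹ * α) (fun u => x * u) ?_ ?_ ?_ ?_ ?_
    · intro α hα
      rw [mem_filter] at hα ⊢
      exact ⟨mem_univ _, mul_ne_zero (inv_ne_zero hx0) hα.2⟩
    · intro u hu
      rw [mem_filter] at hu ⊢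
      exact ⟨mem_univ _, mul_ne_zero hx0 hu.2⟩
    · intro α _; field_simp
    · intro u _; field_simp
    · intro α hα
      rw [mem_filter] at hα
      have hα0 : α ≠ 0 := hα.2
      congr 1
      field_simp
  -- Step 3: rewrite and swap
  have step3 : ∑ x ∈ S, kloos F (x ^ 2)
      = ∑ u ∈ S, ∑ x ∈ S, canChar F ((u + u⁻¹) * x) := by
    rw [sum_congr rfl step2, Finset.sum_comm]
  -- Step 4: split according to u + u⁻¹ = 0
  have hsplit := Finset.sum_filter_add_sum_filter_not S (fun u => u + u⁻¹ = 0)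
      (fun u => ∑ x ∈ S, canChar F ((u + u⁻¹) * x))
  set T := S.filter (fun u => u + u⁻¹ = 0) with hTdef
  have hTsum : ∑ u ∈ T, (∑ x ∈ S, canChar F ((u + u⁻¹) * x))
      = (T.card : ℂ) * ((3 ^ r - 1 : ℕ) : ℂ) := by
    have h1 : ∀ u ∈ T, (∑ x ∈ S, canChar F ((u + u⁻¹) * x)) = ((3 ^ r - 1 : ℕ) : ℂ) := by
      intro u hu
      rw [hTdef, mem_filter] at hu
      rw [hu.2]
      calc ∑ x ∈ S, canChar F (0 * x) = ∑ x ∈ S, 1 :=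
            sum_congr rfl fun x _ => by rw [zero_mul, canChar_zero]
        _ = (S.card : ℂ) := by rw [sum_const, nsmul_eq_mul, mul_one]
        _ = _ := by rw [hcardS]
    rw [sum_congr rfl h1, sum_const, nsmul_eq_mul]
  have hNsum : ∑ u ∈ S.filter (fun u => ¬(u + u⁻¹ = 0)), (∑ x ∈ S, canChar F ((u + u⁻¹) * x))
      = ((S.filter (fun u => ¬(u + u⁻¹ = 0))).card : ℂ) * (-1) := by
    have h1 : ∀ u ∈ S.filter (fun u => ¬(u + u⁻¹ = 0)),
        (∑ x ∈ S, canChar F ((u + u⁻¹) * x)) = -1 := by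
      intro u hu
      rw [mem_filter] at hu
      exact sum_canChar_mul F _ hu.2
    rw [sum_congr rfl h1, sum_const, nsmul_eq_mul]
  have hcardsplit : T.card + (S.filter (fun u => ¬(u + u⁻¹ = 0))).card = S.card :=
    Finset.card_filter_add_card_filter_not _
  -- characterize T
  have hTchar : T = S.filter (fun u => u ^ 2 = -1) := by
    rw [hTdef]
    refine filter_congr fun u hu => ?_
    rw [hSdef, mem_filter] at hu
    have hu0 : u ≠ 0 := hu.2
    constructor
    · intro h
      have := mul_eq_zero_of_left h u
      rw [add_mul, inv_mul_cancel₀ hu0] at this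
      linear_combination this
    · intro h
      have : u * (u + u⁻¹) = 0 := by
        rw [mul_add, mul_inv_cancel₀ hu0]
        linear_combination h
      rcases mul_eq_zero.1 this with h' | h'
      · exact absurd h' hu0
      · exact h'
  -- total
  have htotal : 2 * ∑ a ∈ A, kloos F a
      = (T.card : ℂ) * ((3 ^ r - 1 : ℕ) : ℂ)
        + ((S.filter (fun u => ¬(u + u⁻¹ = 0))).card : ℂ) * (-1) := by
    rw [← step1, step3, ← hTsum, ← hNsum]
    exact hsplit.symm
  -- card of T by parity
  rcases Nat.even_or_odd r with he | ho
  · -- r even : -1 is a square, T has two elements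
    have hmod : Fintype.card F % 4 = 1 := by
      obtain ⟨k, rfl⟩ := he
      rw [hF, ← two_mul, pow_mul]
      rw [Nat.pow_mod]
      norm_num
    have hsq : IsSquare (-1 : F) := FiniteField.isSquare_neg_one_iff.mpr (by omega)
    obtain ⟨i, hi⟩ := hsq
    have hi' : (-1 : F) = i ^ 2 := by rw [hi]; ring
    have hi0 : i ≠ 0 := by
      intro h; rw [h] at hi'; simp at hi'
    have hTeq : T = {i, -i} := by
      rw [hTchar]; exact fiber_eq F hi0 hi'
    have hcardT : T.card = 2 := by
      rw [hTeq, card_insert_of_notMem (by simpa using neg_ne_self' F hi0), card_singleton]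
    have hcardN : (S.filter (fun u => ¬(u + u⁻¹ = 0))).card = 3 ^ r - 3 := by
      rw [hcardT, hcardS] at hcardsplit; omega
    rw [hcardT, hcardN] at htotal
    have h1 : ((3 ^ r - 1 : ℕ) : ℂ) = (3 : ℂ) ^ r - 1 := by
      push_cast [Nat.cast_sub (by omega : 1 ≤ 3 ^ r)]; ring
    have h3 : ((3 ^ r - 3 : ℕ) : ℂ) = (3 : ℂ) ^ r - 3 := by
      push_cast [Nat.cast_sub hq3]; ring
    rw [h1, h3] at htotal
    rw [he.neg_one_pow]
    push_cast at htotal ⊢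
    linear_combination htotal / 2
  · -- r odd : -1 is not a square, T is empty
    have hmod : Fintype.card F % 4 = 3 := by
      obtain ⟨k, rfl⟩ := ho
      rw [hF, pow_succ, pow_mul, Nat.mul_mod, Nat.pow_mod]
      norm_num
    have hsq : ¬ IsSquare (-1 : F) := by
      rw [FiniteField.isSquare_neg_one_iff]; omega
    have hTeq : T = ∅ := by
      rw [hTchar, eq_empty_iff_forall_notMem]
      intro u hu
      rw [mem_filter] at hu
      exact hsq ⟨u, by rw [← hu.2]; ring⟩
    have hcardT : T.card = 0 := by rw [hTeq]; exact card_empty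
    have hcardN : (S.filter (fun u => ¬(u + u⁻¹ = 0))).card = 3 ^ r - 1 := by
      rw [hcardT, hcardS] at hcardsplit; omega
    rw [hcardT, hcardN] at htotal
    have h1 : ((3 ^ r - 1 : ℕ) : ℂ) = (3 : ℂ) ^ r - 1 := by
      push_cast [Nat.cast_sub (by omega : 1 ≤ 3 ^ r)]; ring
    rw [h1] at htotal
    rw [ho.neg_one_pow]
    push_cast at htotal ⊢
    linear_combination htotal / 2
end

section
/- The first moment of Kloosterman sums with trace zero square arguments satisfies T₀SK = ∑_{a∈F_q^*, tr(a)=0} K(λ;a²) = (1/3)·(-1)^r·q + 1. -/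
open Finset

noncomputable def eZ3 : AddChar (ZMod 3) ℂ where
  toFun t := Complex.exp (2 * Real.pi * Complex.I * (t.val : ℂ) / 3)
  map_zero_eq_one' := by simp
  map_add_eq_mul' := by
    intro a b
    have hd : 3 * ((a.val + b.val) / 3) + (a.val + b.val) % 3 = a.val + b.val :=
      Nat.div_add_mod _ 3
    have hdC := congrArg (Nat.cast : ℕ → ℂ) hd
    push_cast at hdC
    have hc : ((a + b).val : ℂ) = (a.val : ℂ) + (b.val : ℂ)
        - 3 * (((a.val + b.val) / 3 : ℕ) : ℂ) := by
      rw [ZMod.val_add]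
      linear_combination hdC
    show Complex.exp (2 * Real.pi * Complex.I * (((a + b).val : ℕ) : ℂ) / 3) = _
    rw [← Complex.exp_add, hc]
    rw [show 2 * (Real.pi : ℂ) * Complex.I *
          ((a.val : ℂ) + (b.val : ℂ) - 3 * (((a.val + b.val) / 3 : ℕ) : ℂ)) / 3
        = (2 * Real.pi * Complex.I * (a.val : ℂ) / 3
            + 2 * Real.pi * Complex.I * (b.val : ℂ) / 3)
          - (((a.val + b.val) / 3 : ℕ) : ℂ) * (2 * Real.pi * Complex.I) from by ring]
    rw [Complex.exp_sub, Complex.exp_nat_mul_two_pi_mul_I, div_one]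

lemma eZ3_apply (t : ZMod 3) :
    eZ3 t = Complex.exp (2 * Real.pi * Complex.I * (t.val : ℂ) / 3) := rfl

lemma eZ3_ne_one_of_ne_zero {t : ZMod 3} (ht : t ≠ 0) : eZ3 t ≠ 1 := by
  intro h
  rw [eZ3_apply, Complex.exp_eq_one_iff] at h
  obtain ⟨n, hn⟩ := h
  have hne : (2 * (Real.pi : ℂ) * Complex.I) ≠ 0 := by
    simp [Real.pi_ne_zero, Complex.I_ne_zero]
  have h2 : ((t.val : ℕ) : ℂ) = 3 * n := by
    apply mul_left_cancel₀ hne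
    linear_combination 3 * hn
  have h3 : ((t.val : ℕ) : ℤ) = 3 * n := by exact_mod_cast h2
  have h4 : t.val < 3 := t.val_lt
  have h5 : t.val ≠ 0 := by simpa [ZMod.val_eq_zero] using ht
  omega

lemma sum_eZ3_mul (t : ZMod 3) :
    ∑ c : ZMod 3, eZ3 (c * t) = if t = 0 then 3 else 0 := by
  split_ifs with h
  · subst h
    simp only [mul_zero, AddChar.map_zero_eq_one, Finset.sum_const, Finset.card_univ,
      ZMod.card, nsmul_eq_mul, mul_one]
    norm_num
  · have hne : eZ3.mulShift t ≠ 1 := by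
      have : eZ3.IsPrimitive := AddChar.IsPrimitive.of_ne_one (by
        rw [AddChar.ne_one_iff]; exact ⟨1, eZ3_ne_one_of_ne_zero one_ne_zero⟩)
      exact this h
    have := AddChar.sum_eq_zero_of_ne_one hne
    simpa [AddChar.mulShift_apply, mul_comm] using this

lemma sq_fiber_sum (F : Type) [Field F] [Fintype F] [DecidableEq F]
    (h2 : ringChar F ≠ 2) (f : F → ℂ) :
    ∑ b : F, f (b ^ 2) = ∑ x : F, (((quadraticChar F x : ℤ) : ℂ) + 1) * f x := by
  rw [← Finset.sum_fiberwise_of_maps_to (g := fun b : F => b ^ 2)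
      (fun b _ => Finset.mem_univ (b ^ 2)) (fun b => f (b ^ 2))]
  refine Finset.sum_congr rfl fun x _ => ?_
  have hcard : ((Finset.univ.filter (fun b : F => b ^ 2 = x)).card : ℤ)
      = quadraticChar F x + 1 := by
    have := quadraticChar_card_sqrts h2 x
    rwa [Set.toFinset_setOf] at this
  calc ∑ b ∈ Finset.univ.filter (fun b : F => b ^ 2 = x), f (b ^ 2)
      = ∑ b ∈ Finset.univ.filter (fun b : F => b ^ 2 = x), f x := by
        refine Finset.sum_congr rfl fun b hb => ?_
        rw [(Finset.mem_filter.mp hb).2]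
    _ = ((Finset.univ.filter (fun b : F => b ^ 2 = x)).card : ℂ) * f x := by
        rw [Finset.sum_const, nsmul_eq_mul]
    _ = (((quadraticChar F x : ℤ) : ℂ) + 1) * f x := by
        congr 1
        exact_mod_cast congrArg (Int.cast : ℤ → ℂ) hcard


noncomputable def psiF (F : Type) [Field F] [Fintype F] [Algebra (ZMod 3) F] : AddChar F ℂ :=
  eZ3.compAddMonoidHom (Algebra.trace (ZMod 3) F).toAddMonoidHom

lemma canChar_eq_psiF (F : Type) [Field F] [Fintype F] [Algebra (ZMod 3) F] (x : F) :
    canChar F x = psiF F x := rfl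

lemma psiF_apply (F : Type) [Field F] [Fintype F] [Algebra (ZMod 3) F] (x : F) :
    psiF F x = eZ3 (Algebra.trace (ZMod 3) F x) := rfl

/-- `T₀SK = ∑_{a ∈ F_q^*, tr a = 0} K(λ;a²) = (1/3)·(-1)^r·q + 1`, where q = 3^r. -/
theorem first_moment_trace_zero_square_args (r : ℕ) (hr : 0 < r) (F : Type) [Field F]
    [Fintype F] [DecidableEq F] [Algebra (ZMod 3) F] (hF : Fintype.card F = 3 ^ r) :
    ∑ a ∈ Finset.univ.filter
        (fun a : F => a ≠ 0 ∧ Algebra.trace (ZMod 3) F a = 0),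
      kloos F (a ^ 2)
      = (1 / 3 : ℂ) * (-1 : ℂ) ^ r * (3 ^ r : ℂ) + 1 := by
  classical
  haveI : CharP F 3 := charP_of_injective_algebraMap' (A := F) (ZMod 3) 3
  have hring : ringChar F = 3 := ringChar.eq F 3
  have hne2 : ringChar F ≠ 2 := by rw [hring]; norm_num
  have h3F : (3 : F) = 0 := by exact_mod_cast CharP.cast_eq_zero F 3
  set tr := Algebra.trace (ZMod 3) F with htr
  set ψ := psiF F with hψ
  set χ := (quadraticChar F).ringHomComp (Int.castRingHom ℂ) with hχ
  set G := gaussSum χ ψ with hGdef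
  -- character facts
  have hψne : ψ ≠ 1 := by
    have h0 := Algebra.trace_ne_zero (ZMod 3) F
    obtain ⟨x, hx⟩ : ∃ x : F, tr x ≠ 0 := by
      by_contra h
      push_neg at h
      exact h0 (LinearMap.ext h)
    rw [AddChar.ne_one_iff]
    exact ⟨x, eZ3_ne_one_of_ne_zero hx⟩
  have prim : ψ.IsPrimitive := AddChar.IsPrimitive.of_ne_one hψne
  have hχne : χ ≠ 1 :=
    (MulChar.ringHomComp_ne_one_iff Int.cast_injective).mpr (quadraticChar_ne_one hne2)
  have hχq : χ.IsQuadratic := (quadraticChar_isQuadratic F).comp (Int.castRingHom ℂ)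
  have hχ0 : χ 0 = 0 := by
    show ((quadraticChar F 0 : ℤ) : ℂ) = 0
    rw [quadraticChar_zero]; norm_num
  have hsumχ : ∑ a : F, χ a = 0 := by
    have h := quadraticChar_sum_zero hne2
    calc ∑ a : F, χ a = ((∑ a : F, quadraticChar F a : ℤ) : ℂ) := by push_cast; rfl
      _ = 0 := by rw [h]; norm_num
  have hsumψ : ∑ a : F, ψ a = 0 := AddChar.sum_eq_zero_of_ne_one hψne
  have hB : Finset.univ.filter (fun α : F => α ≠ 0) = Finset.univ.erase 0 :=
    Finset.filter_ne' Finset.univ 0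
  have hψB : ∑ α ∈ Finset.univ.filter (fun α : F => α ≠ 0), ψ α = -1 := by
    rw [hB, Finset.sum_erase_eq_sub (Finset.mem_univ 0), hsumψ, AddChar.map_zero_eq_one]
    ring
  have hχB : ∑ α ∈ Finset.univ.filter (fun α : F => α ≠ 0), χ α = 0 := by
    rw [hB, Finset.sum_erase_eq_sub (Finset.mem_univ 0), hsumχ, hχ0]
    ring
  have hGB : ∑ α ∈ Finset.univ.filter (fun α : F => α ≠ 0), χ α * ψ α = G := by
    rw [hB, Finset.sum_erase_eq_sub (Finset.mem_univ 0), hχ0]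
    simp [hGdef, gaussSum]
  -- the per-α evaluation
  have perα : ∀ α ∈ Finset.univ.filter (fun α : F => α ≠ 0),
      ∑ a ∈ Finset.univ.filter (fun a : F => a ≠ 0 ∧ tr a = 0), ψ (α + a ^ 2 * α⁻¹)
        = (G / 3) * (χ α * ψ α) + (2 * G / 3) * χ α - ψ α := by
    intro α hαmem
    have hα : α ≠ 0 := (Finset.mem_filter.mp hαmem).2
    -- Gauss-sum evaluation of the square sum
    have sq_sum : ∑ b : F, ψ (b ^ 2 * α⁻¹) = χ α * G := by
      rw [sq_fiber_sum F hne2 (fun x => ψ (x * α⁻¹))]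
      have split : ∑ x : F, (((quadraticChar F x : ℤ) : ℂ) + 1) * ψ (x * α⁻¹)
          = ∑ x : F, χ x * (ψ.mulShift α⁻¹) x + ∑ x : F, (ψ.mulShift α⁻¹) x := by
        rw [← Finset.sum_add_distrib]
        refine Finset.sum_congr rfl fun x _ => ?_
        rw [AddChar.mulShift_apply, mul_comm α⁻¹ x]
        have hxc : χ x = ((quadraticChar F x : ℤ) : ℂ) := rfl
        rw [hxc]
        ring
      rw [split]
      have h2 : ∑ x : F, (ψ.mulShift α⁻¹) x = 0 :=
        AddChar.sum_eq_zero_of_ne_one (prim (inv_ne_zero hα))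
      have h1 : ∑ x : F, χ x * (ψ.mulShift α⁻¹) x = χ α * G := by
        have hu := gaussSum_mulShift χ ψ (Units.mk0 α⁻¹ (inv_ne_zero hα))
        have huv : ((Units.mk0 α⁻¹ (inv_ne_zero hα)) : F) = α⁻¹ := rfl
        rw [huv] at hu
        have hinv : χ α * χ α⁻¹ = 1 := by
          rw [← map_mul, mul_inv_cancel₀ hα, map_one]
        calc ∑ x : F, χ x * (ψ.mulShift α⁻¹) x
            = gaussSum χ (ψ.mulShift α⁻¹) := rfl
          _ = (χ α * χ α⁻¹) * gaussSum χ (ψ.mulShift α⁻¹) := by rw [hinv, one_mul]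
          _ = χ α * (χ α⁻¹ * gaussSum χ (ψ.mulShift α⁻¹)) := by ring
          _ = χ α * G := by rw [hu]
      rw [h1, h2, add_zero]
    -- completing the square
    have csq : ∀ v : F, ∑ a : F, ψ (a ^ 2 * α⁻¹ + v * a)
        = ψ (-(v ^ 2 * α)) * (χ α * G) := by
      intro v
      have hbij := Fintype.sum_equiv (Equiv.addRight (v * α))
        (fun b : F => ψ (-(v ^ 2 * α)) * ψ (b ^ 2 * α⁻¹))
        (fun a : F => ψ (a ^ 2 * α⁻¹ + v * a)) ?_
      · rw [← hbij, ← Finset.mul_sum, sq_sum]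
      · intro b
        show ψ (-(v ^ 2 * α)) * ψ (b ^ 2 * α⁻¹) = ψ ((b + v * α) ^ 2 * α⁻¹ + v * (b + v * α))
        rw [← AddChar.map_add_eq_mul]
        congr 1
        have hid : (b + v * α) ^ 2 * α⁻¹ + v * (b + v * α)
            = -(v ^ 2 * α) + b ^ 2 * α⁻¹ := by
          field_simp
          linear_combination (v * α * b + v ^ 2 * α ^ 2) * h3F
        rw [hid]
    -- orthogonality: 3 * K = sum over c
    have key : (3 : ℂ) * (∑ a ∈ Finset.univ.filter (fun a : F => tr a = 0), ψ (a ^ 2 * α⁻¹))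
        = ∑ c : ZMod 3, ∑ a : F, ψ (a ^ 2 * α⁻¹ + (algebraMap (ZMod 3) F c) * a) := by
      rw [Finset.sum_comm]
      have step : ∀ a : F, ∑ c : ZMod 3, ψ (a ^ 2 * α⁻¹ + (algebraMap (ZMod 3) F c) * a)
          = ψ (a ^ 2 * α⁻¹) * (if tr a = 0 then 3 else 0) := by
        intro a
        have : ∀ c : ZMod 3, ψ (a ^ 2 * α⁻¹ + (algebraMap (ZMod 3) F c) * a)
            = ψ (a ^ 2 * α⁻¹) * eZ3 (c * tr a) := by
          intro c
          rw [AddChar.map_add_eq_mul]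
          congr 1
          rw [psiF_apply]
          congr 1
          rw [← Algebra.smul_def, ← htr, map_smul, smul_eq_mul]
        simp_rw [this, ← Finset.mul_sum, sum_eZ3_mul]
      simp_rw [step]
      rw [Finset.mul_sum, Finset.sum_filter]
      refine Finset.sum_congr rfl fun a _ => ?_
      split_ifs <;> ring
    -- evaluate the sum over c
    have hcsum : ∑ c : ZMod 3, ∑ a : F, ψ (a ^ 2 * α⁻¹ + (algebraMap (ZMod 3) F c) * a)
        = χ α * G * (1 + ψ (-α) * 2) := by
      have huniv : (Finset.univ : Finset (ZMod 3)) = {0, 1, 2} := by decide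
      rw [huniv, Finset.sum_insert (by decide), Finset.sum_insert (by decide),
        Finset.sum_singleton, csq _, csq _, csq _]
      have h0 : (algebraMap (ZMod 3) F 0) = 0 := map_zero _
      have h1 : (algebraMap (ZMod 3) F 1) = 1 := map_one _
      have h2sq : (algebraMap (ZMod 3) F 2) ^ 2 = 1 := by
        rw [← map_pow, show (2 : ZMod 3) ^ 2 = 1 from by decide, map_one]
      rw [h0, h1, h2sq]
      have hz : ((0 : F) ^ 2 * α = 0) := by ring
      have ho : -((1 : F) ^ 2 * α) = -α := by ring
      rw [hz, ho, neg_zero, AddChar.map_zero_eq_one, one_mul, one_mul]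
      ring
    have hA : Finset.univ.filter (fun a : F => a ≠ 0 ∧ tr a = 0)
        = (Finset.univ.filter (fun a : F => tr a = 0)).erase 0 := by
      ext a
      simp only [Finset.mem_erase, Finset.mem_filter, Finset.mem_univ, true_and]
    have e2 : ∑ a ∈ Finset.univ.filter (fun a : F => a ≠ 0 ∧ tr a = 0), ψ (a ^ 2 * α⁻¹)
        = (∑ a ∈ Finset.univ.filter (fun a : F => tr a = 0), ψ (a ^ 2 * α⁻¹)) - 1 := by
      rw [hA, Finset.sum_erase_eq_sub (by simp [Finset.mem_filter, map_zero])]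
      congr 1
      rw [show ((0 : F) ^ 2 * α⁻¹) = 0 from by ring, AddChar.map_zero_eq_one]
    have e1 : ∑ a ∈ Finset.univ.filter (fun a : F => a ≠ 0 ∧ tr a = 0), ψ (α + a ^ 2 * α⁻¹)
        = ψ α * ∑ a ∈ Finset.univ.filter (fun a : F => a ≠ 0 ∧ tr a = 0), ψ (a ^ 2 * α⁻¹) := by
      rw [Finset.mul_sum]
      exact Finset.sum_congr rfl fun a _ => AddChar.map_add_eq_mul ψ α _
    have e4 : ψ α * ψ (-α) = 1 := by
      rw [← AddChar.map_add_eq_mul, add_neg_cancel, AddChar.map_zero_eq_one]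
    have e3 : (3 : ℂ) * (∑ a ∈ Finset.univ.filter (fun a : F => tr a = 0), ψ (a ^ 2 * α⁻¹))
        = χ α * G * (1 + ψ (-α) * 2) := by rw [key, hcsum]
    rw [e1, e2]
    linear_combination (ψ α / 3) * e3 + (2 * G / 3) * χ α * e4
  -- assemble
  have swap : ∑ a ∈ Finset.univ.filter (fun a : F => a ≠ 0 ∧ tr a = 0), kloos F (a ^ 2)
      = ∑ α ∈ Finset.univ.filter (fun α : F => α ≠ 0),
          ∑ a ∈ Finset.univ.filter (fun a : F => a ≠ 0 ∧ tr a = 0), ψ (α + a ^ 2 * α⁻¹) := by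
    rw [Finset.sum_comm]
    refine Finset.sum_congr rfl fun a _ => ?_
    unfold kloos
    exact Finset.sum_congr rfl fun α _ => canChar_eq_psiF F _
  have hG2 : G ^ 2 = (-1 : ℂ) ^ r * 3 ^ r := by
    rw [hGdef, gaussSum_sq hχne hχq prim]
    have hm1 : χ (-1) = ((quadraticChar F (-1) : ℤ) : ℂ) := rfl
    rw [hm1, quadraticChar_neg_one hne2]
    have hc4 : ((Fintype.card F : ℕ) : ZMod 4) = (-1 : ZMod 4) ^ r := by
      rw [hF, Nat.cast_pow, show ((3 : ℕ) : ZMod 4) = -1 from by decide]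
    rw [hc4, map_pow, show ZMod.χ₄ (-1) = -1 from by decide, hF]
    push_cast
    ring
  rw [swap, Finset.sum_congr rfl perα, Finset.sum_sub_distrib, Finset.sum_add_distrib,
    ← Finset.mul_sum, ← Finset.mul_sum, hGB, hχB, hψB]
  linear_combination (1 / 3 : ℂ) * hG2
end

section
/- The first moment of Kloosterman sums with trace nonzero square arguments satisfies T₁₂SK = ∑_{a∈F_q^*, tr(a)≠0} K(λ;a²) = (2/3)·(-1)^r·q. -/
open Finset
set_option linter.unusedSectionVars false
set_option linter.unusedVariables false

namespace KA
noncomputable def ζ : ℂ := Complex.exp (2 * Real.pi * Complex.I / 3)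

lemma zeta_pow_three : ζ ^ 3 = 1 := by
  rw [ζ, ← Complex.exp_nat_mul]
  have h : (3 : ℕ) * (2 * ↑Real.pi * Complex.I / 3) = 2 * ↑Real.pi * Complex.I := by
    push_cast; ring
  rw [h, Complex.exp_two_pi_mul_I]

lemma zeta_ne_one : ζ ≠ 1 := by
  intro h
  rw [ζ, Complex.exp_eq_one_iff] at h
  obtain ⟨n, hn⟩ := h
  have hpi : (2 * (Real.pi : ℂ) * Complex.I) ≠ 0 := by
    simp [Real.pi_ne_zero, Complex.I_ne_zero]
  have h1 : (1 : ℂ) * (2 * (Real.pi : ℂ) * Complex.I) =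
      ((3 * n : ℤ) : ℂ) * (2 * (Real.pi : ℂ) * Complex.I) := by
    push_cast
    linear_combination (3 : ℂ) * hn
  have h2 : (1 : ℂ) = ((3 * n : ℤ) : ℂ) := mul_right_cancel₀ hpi h1
  have h3 : (1 : ℤ) = 3 * n := by exact_mod_cast h2
  omega

lemma zeta_sq_add : ζ ^ 2 + ζ + 1 = 0 := by
  have h : (ζ - 1) * (ζ ^ 2 + ζ + 1) = 0 := by
    have := zeta_pow_three
    ring_nf
    linear_combination this
  rcases mul_eq_zero.mp h with h' | h'
  · exact absurd (sub_eq_zero.mp h') zeta_ne_one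
  · exact h'

lemma zeta_sq_ne_one : ζ ^ 2 ≠ 1 := by
  intro h
  apply zeta_ne_one
  have := zeta_pow_three
  calc ζ = ζ ^ 2 * ζ / ζ ^ 2 := by rw [h]; ring
    _ = ζ ^ 3 / ζ ^ 2 := by ring_nf
    _ = 1 / 1 := by rw [this, h]
    _ = 1 := by norm_num

end KA

namespace KA

noncomputable def e (t : ZMod 3) : ℂ := ζ ^ t.val

lemma zeta_pow_mod (m : ℕ) : ζ ^ (m % 3) = ζ ^ m := by
  conv_rhs => rw [← Nat.div_add_mod m 3]
  rw [pow_add, pow_mul, zeta_pow_three, one_pow, one_mul]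

lemma e_add (s t : ZMod 3) : e (s + t) = e s * e t := by
  rw [e, e, e, ← pow_add, ZMod.val_add, zeta_pow_mod]

lemma e_zero : e 0 = 1 := by simp [e, ZMod.val_zero]

lemma e_one : e 1 = ζ := by rw [e]; norm_num [ZMod.val_one]

lemma e_two : e 2 = ζ ^ 2 := by rw [e]; rfl

lemma zmod3_cases (s : ZMod 3) : s = 0 ∨ s = 1 ∨ s = 2 := by revert s; decide

lemma e_ne_one {t : ZMod 3} (ht : t ≠ 0) : e t ≠ 1 := by
  rcases zmod3_cases t with h | h | h <;> subst h
  · exact absurd rfl ht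
  · rw [e_one]; exact zeta_ne_one
  · rw [e_two]; exact zeta_sq_ne_one

lemma sum_zmod3 (f : ZMod 3 → ℂ) : ∑ t : ZMod 3, f t = f 0 + f 1 + f 2 :=
  Fin.sum_univ_three f

lemma sum_e_mul (s : ZMod 3) : ∑ t : ZMod 3, e (t * s) = if s = 0 then 3 else 0 := by
  have h := sum_zmod3 (fun t : ZMod 3 => e (t * s))
  rcases zmod3_cases s with hs | hs | hs <;> subst hs
  · rw [if_pos rfl, h]
    norm_num [e_zero]
  · rw [if_neg (by decide), h]
    have h0 : ((0 : ZMod 3) * 1) = 0 := by decide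
    have h1 : ((1 : ZMod 3) * 1) = 1 := by decide
    have h2 : ((2 : ZMod 3) * 1) = 2 := by decide
    rw [h0, h1, h2, e_zero, e_one, e_two]
    linear_combination zeta_sq_add
  · rw [if_neg (by decide), h]
    have h0 : ((0 : ZMod 3) * 2) = 0 := by decide
    have h1 : ((1 : ZMod 3) * 2) = 2 := by decide
    have h2 : ((2 : ZMod 3) * 2) = 1 := by decide
    rw [h0, h1, h2, e_zero, e_one, e_two]
    linear_combination zeta_sq_add

end KA

namespace KA

variable (F : Type) [Field F] [Fintype F] [DecidableEq F] [Algebra (ZMod 3) F]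

lemma canChar_eq (x : F) : canChar F x = e (Algebra.trace (ZMod 3) F x) := by
  rw [canChar, e, ζ, ← Complex.exp_nat_mul]
  congr 1
  ring

lemma sum_char_eq_zero {u : F} (hu : u ≠ 0) :
    ∑ a : F, e (Algebra.trace (ZMod 3) F (a * u)) = 0 := by
  haveI : Fact (Nat.Prime 3) := ⟨by norm_num⟩
  obtain ⟨b, hb⟩ : ∃ b : F, Algebra.trace (ZMod 3) F (b * u) ≠ 0 := by
    by_contra hf
    push_neg at hf
    apply hu
    apply (traceForm_nondegenerate (ZMod 3) F).1 u
    intro b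
    rw [Algebra.traceForm_apply, mul_comm]
    exact hf b
  have key : ∑ a : F, e (Algebra.trace (ZMod 3) F (a * u))
      = e (Algebra.trace (ZMod 3) F (b * u)) * ∑ a : F, e (Algebra.trace (ZMod 3) F (a * u)) := by
    conv_lhs => rw [← (Fintype.sum_equiv (Equiv.addRight b)
      (fun a : F => e (Algebra.trace (ZMod 3) F ((a + b) * u)))
      (fun a : F => e (Algebra.trace (ZMod 3) F (a * u))) (fun a => rfl))]
    rw [Finset.mul_sum]
    apply Finset.sum_congr rfl
    intro a _
    rw [add_mul, map_add, e_add, mul_comm]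
  have h1 : (e (Algebra.trace (ZMod 3) F (b * u)) - 1)
      * ∑ a : F, e (Algebra.trace (ZMod 3) F (a * u)) = 0 := by
    rw [sub_mul, one_mul, ← key, sub_self]
  rcases mul_eq_zero.mp h1 with h | h
  · exact absurd (sub_eq_zero.mp h) (e_ne_one hb)
  · exact h

lemma sum_char (v : F) :
    ∑ a : F, e (Algebra.trace (ZMod 3) F (a * v))
      = if v = 0 then (Fintype.card F : ℂ) else 0 := by
  split_ifs with h
  · subst h
    simp [e_zero, Finset.card_univ]
  · exact sum_char_eq_zero F h

end KA

namespace KA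
variable (F : Type) [Field F] [Fintype F] [DecidableEq F] [Algebra (ZMod 3) F]

lemma kloos_sub {a : F} (ha : a ≠ 0) :
    kloos F (a ^ 2)
      = ∑ β ∈ Finset.univ.filter (fun β : F => β ≠ 0),
          e (Algebra.trace (ZMod 3) F (a * (β + β⁻¹))) := by
  rw [kloos]
  refine Finset.sum_nbij' (fun α => a⁻¹ * α) (fun β => a * β) ?_ ?_ ?_ ?_ ?_
  · intro α hα
    simp only [Finset.mem_filter, Finset.mem_univ, true_and] at hα ⊢
    exact mul_ne_zero (inv_ne_zero ha) hα
  · intro β hβ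
    simp only [Finset.mem_filter, Finset.mem_univ, true_and] at hβ ⊢
    exact mul_ne_zero ha hβ
  · intro α _
    field_simp
  · intro β _
    field_simp
  · intro α hα
    simp only [Finset.mem_filter, Finset.mem_univ, true_and] at hα
    rw [canChar_eq]
    congr 2
    field_simp

end KA

namespace KA
variable (F : Type) [Field F] [Fintype F] [DecidableEq F] [Algebra (ZMod 3) F]

lemma two_eq_neg_one : (2 : F) = -1 := by
  haveI : Fact (Nat.Prime 3) := ⟨by norm_num⟩
  haveI : CharP F 3 := charP_of_injective_algebraMap (algebraMap (ZMod 3) F).injective 3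
  have h : (3 : F) = 0 := by exact_mod_cast CharP.cast_eq_zero F 3
  linear_combination h

lemma filter_t1 : Finset.univ.filter (fun β : F => β ≠ 0 ∧ β + β⁻¹ + 1 = 0) = {1} := by
  have htwo := two_eq_neg_one F
  ext β
  simp only [Finset.mem_filter, Finset.mem_univ, true_and, Finset.mem_singleton]
  constructor
  · rintro ⟨hβ, h⟩
    have hm : β * β + β * β⁻¹ + β * 1 = 0 := by
      rw [← mul_add, ← mul_add, h, mul_zero]
    rw [mul_inv_cancel₀ hβ] at hm
    have hsq : (β - 1) ^ 2 = 0 := by linear_combination hm - β * htwo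
    exact sub_eq_zero.mp (pow_eq_zero_iff (n := 2) (by norm_num) |>.mp hsq)
  · rintro rfl
    refine ⟨one_ne_zero, ?_⟩
    rw [inv_one]
    linear_combination htwo

lemma filter_t2 : Finset.univ.filter (fun β : F => β ≠ 0 ∧ β + β⁻¹ + 2 = 0) = {-1} := by
  have htwo := two_eq_neg_one F
  ext β
  simp only [Finset.mem_filter, Finset.mem_univ, true_and, Finset.mem_singleton]
  constructor
  · rintro ⟨hβ, h⟩
    have hm : β * β + β * β⁻¹ + β * 2 = 0 := by
      rw [← mul_add, ← mul_add, h, mul_zero]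
    rw [mul_inv_cancel₀ hβ] at hm
    have hsq : (β + 1) ^ 2 = 0 := by linear_combination hm
    have h1 : β + 1 = 0 := pow_eq_zero_iff (n := 2) (by norm_num) |>.mp hsq
    linear_combination h1
  · rintro rfl
    refine ⟨neg_ne_zero.mpr one_ne_zero, ?_⟩
    rw [inv_neg, inv_one]
    ring

end KA

namespace KA
variable (F : Type) [Field F] [Fintype F] [DecidableEq F] [Algebra (ZMod 3) F]

lemma pow_three_mod_four (n : ℕ) : 3 ^ n % 4 = if n % 2 = 0 then 1 else 3 := by
  induction n with
  | zero => simp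
  | succ m ih =>
    rw [pow_succ, Nat.mul_mod, ih]
    by_cases h2 : m % 2 = 0
    · rw [if_pos h2, if_neg (by omega)]
    · rw [if_neg h2, if_pos (by omega)]

lemma filter_t0 (r : ℕ) (hF : Fintype.card F = 3 ^ r) :
    (Finset.univ.filter (fun β : F => β ≠ 0 ∧ β + β⁻¹ = 0)).card
      = if r % 2 = 0 then 2 else 0 := by
  have htwo := two_eq_neg_one F
  have hsq : IsSquare (-1 : F) ↔ r % 2 = 0 := by
    rw [FiniteField.isSquare_neg_one_iff, hF, pow_three_mod_four]
    by_cases h2 : r % 2 = 0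
    · simp [h2]
    · simp [h2]
  split_ifs with hpar
  · obtain ⟨γ, hγ⟩ := hsq.mpr hpar
    have hγ0 : γ ≠ 0 := by
      intro h
      rw [h, mul_zero] at hγ
      exact neg_ne_zero.mpr (one_ne_zero (α := F)) hγ
    have hmem : ∀ δ : F, δ ≠ 0 → δ * δ = -1 → δ ≠ 0 ∧ δ + δ⁻¹ = 0 := by
      intro δ hδ hδ2
      refine ⟨hδ, ?_⟩
      have : δ * (δ + δ⁻¹) = 0 := by
        rw [mul_add, mul_inv_cancel₀ hδ, hδ2]
        ring
      rcases mul_eq_zero.mp this with h | h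
      · exact absurd h hδ
      · exact h
    have hset : Finset.univ.filter (fun β : F => β ≠ 0 ∧ β + β⁻¹ = 0) = {γ, -γ} := by
      ext β
      simp only [Finset.mem_filter, Finset.mem_univ, true_and, Finset.mem_insert,
        Finset.mem_singleton]
      constructor
      · rintro ⟨hβ, h⟩
        have hm : β * β + β * β⁻¹ = 0 := by rw [← mul_add, h, mul_zero]
        rw [mul_inv_cancel₀ hβ] at hm
        have hfac : (β - γ) * (β + γ) = 0 := by linear_combination hm + hγ
        rcases mul_eq_zero.mp hfac with h' | h'
        · exact Or.inl (sub_eq_zero.mp h')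
        · exact Or.inr (eq_neg_of_add_eq_zero_left h')
      · rintro (h | h)
        · rw [h]; exact hmem γ hγ0 hγ.symm
        · rw [h]; exact hmem (-γ) (neg_ne_zero.mpr hγ0) (by linear_combination -hγ)
    rw [hset]
    rw [Finset.card_insert_of_notMem, Finset.card_singleton]
    simp only [Finset.mem_singleton]
    intro h
    have h2γ : γ * 2 = 0 := by linear_combination h
    rcases mul_eq_zero.mp h2γ with h' | h'
    · exact hγ0 h'
    · rw [htwo] at h'
      exact neg_ne_zero.mpr (one_ne_zero (α := F)) h'
  · rw [Finset.card_eq_zero, Finset.filter_eq_empty_iff]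
    intro β _
    rintro ⟨hβ, h⟩
    apply (by simpa [hpar] using hsq : ¬ IsSquare (-1 : F))
    have hm : β * β + β * β⁻¹ = 0 := by rw [← mul_add, h, mul_zero]
    rw [mul_inv_cancel₀ hβ] at hm
    exact ⟨β, by linear_combination -hm⟩

end KA

namespace KA
variable (F : Type) [Field F] [Fintype F] [DecidableEq F] [Algebra (ZMod 3) F]

lemma inner_sum (u : F) :
    ∑ a ∈ Finset.univ.filter
        (fun a : F => a ≠ 0 ∧ Algebra.trace (ZMod 3) F a ≠ 0),
        e (Algebra.trace (ZMod 3) F (a * u))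
      = (if u = 0 then (Fintype.card F : ℂ) else 0)
        - (1/3) * ∑ t : ZMod 3,
            (if u + algebraMap (ZMod 3) F t = 0 then (Fintype.card F : ℂ) else 0) := by
  classical
  have hfe : Finset.univ.filter
        (fun a : F => a ≠ 0 ∧ Algebra.trace (ZMod 3) F a ≠ 0)
      = Finset.univ.filter (fun a : F => ¬ Algebra.trace (ZMod 3) F a = 0) := by
    apply Finset.filter_congr
    intro a _
    constructor
    · rintro ⟨_, h⟩; exact h
    · intro h
      refine ⟨?_, h⟩
      rintro rfl
      exact h (map_zero _)
  rw [hfe]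
  have hsplit := Finset.sum_filter_add_sum_filter_not Finset.univ
      (fun a : F => Algebra.trace (ZMod 3) F a = 0)
      (fun a => e (Algebra.trace (ZMod 3) F (a * u)))
  have hker : ∑ a ∈ Finset.univ.filter
        (fun a : F => Algebra.trace (ZMod 3) F a = 0),
        e (Algebra.trace (ZMod 3) F (a * u))
      = (1/3) * ∑ t : ZMod 3,
          (if u + algebraMap (ZMod 3) F t = 0 then (Fintype.card F : ℂ) else 0) := by
    rw [Finset.sum_filter]
    have hterm : ∀ a : F,
        (if Algebra.trace (ZMod 3) F a = 0
          then e (Algebra.trace (ZMod 3) F (a * u)) else 0)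
        = (1/3) * ∑ t : ZMod 3,
            e (Algebra.trace (ZMod 3) F (a * (u + algebraMap (ZMod 3) F t))) := by
      intro a
      have h1 : ∀ t : ZMod 3,
          e (Algebra.trace (ZMod 3) F (a * (u + algebraMap (ZMod 3) F t)))
          = e (Algebra.trace (ZMod 3) F (a * u)) * e (t * Algebra.trace (ZMod 3) F a) := by
        intro t
        rw [← e_add]
        congr 1
        have h2 : t * Algebra.trace (ZMod 3) F a
            = Algebra.trace (ZMod 3) F (algebraMap (ZMod 3) F t * a) := by
          rw [← Algebra.smul_def, map_smul, smul_eq_mul]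
        rw [h2, show a * (u + algebraMap (ZMod 3) F t)
            = a * u + algebraMap (ZMod 3) F t * a by ring, map_add]
      calc (if Algebra.trace (ZMod 3) F a = 0
            then e (Algebra.trace (ZMod 3) F (a * u)) else 0)
          = (1/3) * ((if Algebra.trace (ZMod 3) F a = 0 then (3:ℂ) else 0)
              * e (Algebra.trace (ZMod 3) F (a * u))) := by
            split_ifs <;> ring
        _ = (1/3) * ((∑ t : ZMod 3, e (t * Algebra.trace (ZMod 3) F a))
              * e (Algebra.trace (ZMod 3) F (a * u))) := by
            rw [sum_e_mul]
        _ = (1/3) * ∑ t : ZMod 3,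
              e (Algebra.trace (ZMod 3) F (a * (u + algebraMap (ZMod 3) F t))) := by
            rw [Finset.sum_mul]
            congr 1
            apply Finset.sum_congr rfl
            intro t _
            rw [h1 t]
            ring
    simp_rw [hterm]
    rw [← Finset.mul_sum, Finset.sum_comm]
    congr 1
    apply Finset.sum_congr rfl
    intro t _
    have := sum_char F (u + algebraMap (ZMod 3) F t)
    simpa [mul_comm] using this
  have hB := eq_sub_of_add_eq' hsplit
  rw [hB, hker]
  congr 1
  exact sum_char F u

end KA


/-- `T₁₂SK = ∑_{a ∈ F_q^*, tr a ≠ 0} K(λ;a²) = (2/3)·(-1)^r·q`, where q = 3^r. -/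
theorem first_moment_trace_nonzero_square_args (r : ℕ) (hr : 0 < r) (F : Type) [Field F]
    [Fintype F] [DecidableEq F] [Algebra (ZMod 3) F] (hF : Fintype.card F = 3 ^ r) :
    ∑ a ∈ Finset.univ.filter
        (fun a : F => a ≠ 0 ∧ Algebra.trace (ZMod 3) F a ≠ 0),
      kloos F (a ^ 2)
      = (2 / 3 : ℂ) * (-1 : ℂ) ^ r * (3 ^ r : ℂ) := by
  classical
  have hq : (Fintype.card F : ℂ) = (3 : ℂ) ^ r := by rw [hF]; push_cast; ring
  have step1 : ∑ a ∈ Finset.univ.filter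
        (fun a : F => a ≠ 0 ∧ Algebra.trace (ZMod 3) F a ≠ 0), kloos F (a ^ 2)
      = ∑ a ∈ Finset.univ.filter
          (fun a : F => a ≠ 0 ∧ Algebra.trace (ZMod 3) F a ≠ 0),
          ∑ β ∈ Finset.univ.filter (fun β : F => β ≠ 0),
            KA.e (Algebra.trace (ZMod 3) F (a * (β + β⁻¹))) := by
    apply Finset.sum_congr rfl
    intro a ha
    simp only [Finset.mem_filter] at ha
    exact KA.kloos_sub F ha.2.1
  rw [step1, Finset.sum_comm]
  rw [Finset.sum_congr rfl (fun β _ => KA.inner_sum F (β + β⁻¹))]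
  rw [Finset.sum_sub_distrib]
  have hS1 : ∑ β ∈ Finset.univ.filter (fun β : F => β ≠ 0),
      (if β + β⁻¹ = 0 then (Fintype.card F : ℂ) else 0)
      = (if r % 2 = 0 then (2:ℂ) else 0) * (Fintype.card F : ℂ) := by
    rw [← Finset.sum_filter, Finset.filter_filter, Finset.sum_const, nsmul_eq_mul,
        KA.filter_t0 F r hF]
    split_ifs <;> norm_num
  have e1 : ∑ β ∈ Finset.univ.filter (fun β : F => β ≠ 0),
      (if β + β⁻¹ + algebraMap (ZMod 3) F 1 = 0 then (Fintype.card F : ℂ) else 0)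
      = (Fintype.card F : ℂ) := by
    simp only [map_one]
    rw [← Finset.sum_filter, Finset.filter_filter, KA.filter_t1 F, Finset.sum_singleton]
  have e2 : ∑ β ∈ Finset.univ.filter (fun β : F => β ≠ 0),
      (if β + β⁻¹ + algebraMap (ZMod 3) F 2 = 0 then (Fintype.card F : ℂ) else 0)
      = (Fintype.card F : ℂ) := by
    simp only [map_ofNat]
    rw [← Finset.sum_filter, Finset.filter_filter, KA.filter_t2 F, Finset.sum_singleton]
  have e0 : ∑ β ∈ Finset.univ.filter (fun β : F => β ≠ 0),
      (if β + β⁻¹ + algebraMap (ZMod 3) F 0 = 0 then (Fintype.card F : ℂ) else 0)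
      = (if r % 2 = 0 then (2:ℂ) else 0) * (Fintype.card F : ℂ) := by
    simp only [map_zero, add_zero]
    exact hS1
  have hS2 : ∑ β ∈ Finset.univ.filter (fun β : F => β ≠ 0),
      ((1:ℂ)/3) * ∑ t : ZMod 3,
        (if β + β⁻¹ + algebraMap (ZMod 3) F t = 0 then (Fintype.card F : ℂ) else 0)
      = ((1:ℂ)/3) * (((if r % 2 = 0 then (2:ℂ) else 0) + 2) * (Fintype.card F : ℂ)) := by
    rw [← Finset.mul_sum]
    congr 1
    rw [Finset.sum_comm, KA.sum_zmod3]
    rw [e0, e1, e2]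
    ring
  rw [hS1, hS2, hq]
  rcases Nat.even_or_odd r with h | h
  · rw [if_pos (Nat.even_iff.mp h), Even.neg_one_pow h]
    ring
  · rw [if_neg (by rw [Nat.odd_iff.mp h]; norm_num : ¬ r % 2 = 0), Odd.neg_one_pow h]
    ring
end
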